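/- Let M ≥ 2, s = 2, and fix times T₁,...,T_M > 0, boundary data (p₀, v₀) and (p_M, v_M), and intermediate waypoints q₁,...,q_{M-1}. Then the quadratic function of the free intermediate velocities ṽ = (w₁,...,w_{M-1}) ∈ ℝ^{M-1} given by J(ṽ) = Σᵢ dᵢ^T H(Tᵢ) dᵢ (where dᵢ collects the endpoint positions/velocities of piece i, with positions fixed and interior velocities equal to the corresponding wⱼ) is strictly convex, so the minimizer ṽ* exists, is unique, and satisfies the tridiagonal linear system M ṽ* = b̄ with M_{ii} = 4/Tᵢ + 4/T_{i+1}, M_{i,i+1} = M_{i+1,i} = 2/T_{i+1}. -/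

import Mathlib

open Matrix

/-- Acceleration-energy quadratic form of a cubic piece of duration `t`,
in terms of end-derivatives `d = (pos at start, vel at start, pos at end, vel at end)`. -/
noncomputable def Hmat (t : ℝ) : Matrix (Fin 4) (Fin 4) ℝ :=
  (1 / t ^ 3) •
    !![(12 : ℝ), 6*t, -12, 6*t;
       6*t, 4*t^2, -6*t, 2*t^2;
       -12, -6*t, 12, -6*t;
       6*t, 2*t^2, -6*t, 4*t^2]

/-- The full velocity profile: boundary velocities `v0`, `vM` are fixed, while the
interior velocities are the free variables `w`. -/
noncomputable def vel (M : ℕ) (v0 vM : ℝ) (w : Fin (M - 1) → ℝ) (k : Fin (M + 1)) : ℝ :=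
  if hk0 : k.val = 0 then v0
  else if hkM : k.val = M then vM
  else w ⟨k.val - 1, by have := k.isLt; omega⟩

/-- Total acceleration energy of the `M`-piece cubic spline as a function of the free
interior velocities. -/
noncomputable def Jcost (M : ℕ) (T : Fin M → ℝ) (pos : Fin (M + 1) → ℝ) (v0 vM : ℝ)
    (w : Fin (M - 1) → ℝ) : ℝ :=
  ∑ i : Fin M,
    dotProduct
      ![pos i.castSucc, vel M v0 vM w i.castSucc, pos i.succ, vel M v0 vM w i.succ]
      ((Hmat (T i)).mulVec
        ![pos i.castSucc, vel M v0 vM w i.castSucc, pos i.succ, vel M v0 vM w i.succ])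

/-- The symmetric tridiagonal coefficient matrix of the optimality system. -/
noncomputable def Mtri (M : ℕ) (T : Fin M → ℝ) : Matrix (Fin (M - 1)) (Fin (M - 1)) ℝ :=
  fun i j =>
    if i = j then
      4 / T ⟨i.val, by have := i.isLt; omega⟩ + 4 / T ⟨i.val + 1, by have := i.isLt; omega⟩
    else if i.val + 1 = j.val ∨ j.val + 1 = i.val then
      2 / T ⟨max i.val j.val, by have := i.isLt; have := j.isLt; omega⟩
    else 0

/-- The right-hand side of the optimality system, determined by the fixed positions and
boundary velocities. -/
noncomputable def btri (M : ℕ) (T : Fin M → ℝ) (pos : Fin (M + 1) → ℝ) (v0 vM : ℝ)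
    (i : Fin (M - 1)) : ℝ :=
  6 * (pos ⟨i.val + 1, by have := i.isLt; omega⟩ - pos ⟨i.val, by have := i.isLt; omega⟩) /
      (T ⟨i.val, by have := i.isLt; omega⟩) ^ 2 +
    6 * (pos ⟨i.val + 2, by have := i.isLt; omega⟩ - pos ⟨i.val + 1, by have := i.isLt; omega⟩) /
      (T ⟨i.val + 1, by have := i.isLt; omega⟩) ^ 2 -
    (if i.val = 0 then 2 * v0 / T ⟨0, by have := i.isLt; omega⟩ else 0) -
    (if i.val = M - 2 then 2 * vM / T ⟨M - 1, by have := i.isLt; omega⟩ else 0)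


variable {N : ℕ}

lemma piece_expand (t a b u v : ℝ) (ht : t ≠ 0) :
    dotProduct ![a,u,b,v] ((Hmat t).mulVec ![a,u,b,v]) =
      12*(b-a)^2/t^3 - 12*(b-a)*(u+v)/t^2 + 4*(u^2+u*v+v^2)/t := by
  simp [Hmat, Matrix.mulVec, dotProduct, Fin.sum_univ_succ]
  field_simp
  ring


lemma vel_eval (a b : ℝ) (w : Fin (N+1) → ℝ) (k : Fin (N+3)) (j : Fin (N+1))
    (h : k.val = j.val + 1) : vel (N+2) a b w k = w j := by
  simp only [vel]
  rw [dif_neg (by omega), dif_neg (by have := j.isLt; omega)]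
  exact congrArg w (Fin.ext (by simp [h]))

lemma vel_bd0 (a b : ℝ) (w : Fin (N+1) → ℝ) (k : Fin (N+3)) (h : k.val = 0) :
    vel (N+2) a b w k = a := by simp [vel, h]

lemma vel_bdM (a b : ℝ) (w : Fin (N+1) → ℝ) (k : Fin (N+3)) (h : k.val = N+2) :
    vel (N+2) a b w k = b := by
  simp only [vel]; rw [dif_neg (by omega), dif_pos h]

lemma sum_shift1 (Z : Fin (N+3) → ℝ) (c : Fin (N+2) → ℝ) (h0 : Z 0 = 0) :
    ∑ i : Fin (N+2), Z i.castSucc * c i = ∑ j : Fin (N+1), Z j.succ.castSucc * c j.succ := by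
  rw [Fin.sum_univ_succ]; simp [h0]

lemma sum_shift2 (Z : Fin (N+3) → ℝ) (c : Fin (N+2) → ℝ)
    (hM : Z ⟨N+2, by omega⟩ = 0) :
    ∑ i : Fin (N+2), Z i.succ * c i = ∑ j : Fin (N+1), Z j.castSucc.succ * c j.castSucc := by
  rw [Fin.sum_univ_castSucc]
  have : (Fin.last (N+1)).succ = (⟨N+2, by omega⟩ : Fin (N+3)) := rfl
  simp [this, hM]


lemma mtri_symm (T : Fin (N+2) → ℝ) (i j : Fin (N+1)) :
    Mtri (N+2) T i j = Mtri (N+2) T j i := by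
  unfold Mtri
  by_cases h : i = j
  · subst h; rfl
  · rw [if_neg h, if_neg (Ne.symm h)]
    by_cases h2 : (i:ℕ)+1 = (j:ℕ) ∨ (j:ℕ)+1 = (i:ℕ)
    · rw [if_pos h2, if_pos (Or.symm h2)]
      have : (⟨max (i:ℕ) (j:ℕ), by have := i.isLt; have := j.isLt; omega⟩ : Fin (N+2))
           = ⟨max (j:ℕ) (i:ℕ), by have := i.isLt; have := j.isLt; omega⟩ :=
        Fin.ext (by simp [Nat.max_comm])
      rw [this]
    · rw [if_neg h2, if_neg (fun hc => h2 (Or.symm hc))]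

lemma mtri_row (T : Fin (N+2) → ℝ) (v : Fin (N+1) → ℝ) (j : Fin (N+1)) :
    (Mtri (N+2) T).mulVec v j
      = (4 / T ⟨j.val, by have := j.isLt; omega⟩ + 4 / T ⟨j.val+1, by have := j.isLt; omega⟩) * v j
        + (2 / T ⟨j.val+1, by have := j.isLt; omega⟩) *
            (if h : j.val + 1 < N+1 then v ⟨j.val+1, h⟩ else 0)
        + (2 / T ⟨j.val, by have := j.isLt; omega⟩) *
            (if h : 0 < j.val then v ⟨j.val-1, by omega⟩ else 0) := by
  have point : ∀ k : Fin (N+1), Mtri (N+2) T j k * v k =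
      (if k = j then (4 / T ⟨j.val, by have := j.isLt; omega⟩
            + 4 / T ⟨j.val+1, by have := j.isLt; omega⟩) * v k else 0)
      + (if k.val = j.val + 1 then (2 / T ⟨j.val+1, by have := j.isLt; omega⟩) * v k else 0)
      + (if k.val + 1 = j.val then (2 / T ⟨j.val, by have := j.isLt; omega⟩) * v k else 0) := by
    intro k
    unfold Mtri
    by_cases h1 : j = k
    · subst h1
      rw [if_pos rfl, if_pos rfl, if_neg (by omega), if_neg (by omega)]
      ring
    · rw [if_neg h1, if_neg (show ¬ k = j from fun hc => h1 hc.symm)]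
      by_cases h2 : (j:ℕ) + 1 = (k:ℕ)
      · rw [if_pos (Or.inl h2), if_pos (show (k:ℕ) = (j:ℕ)+1 from h2.symm),
          if_neg (by omega)]
        have : (⟨max (j:ℕ) (k:ℕ), by have := j.isLt; have := k.isLt; omega⟩ : Fin (N+2))
             = ⟨(j:ℕ)+1, by have := j.isLt; omega⟩ := Fin.ext (by simp; omega)
        rw [this]; ring
      · by_cases h3 : (k:ℕ) + 1 = (j:ℕ)
        · rw [if_pos (Or.inr h3), if_neg (by omega), if_pos h3]
          have : (⟨max (j:ℕ) (k:ℕ), by have := j.isLt; have := k.isLt; omega⟩ : Fin (N+2))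
               = ⟨(j:ℕ), by have := j.isLt; omega⟩ := Fin.ext (by simp; omega)
          rw [this]; ring
        · rw [if_neg (by omega), if_neg (by omega), if_neg (by omega)]; ring
  have key : ∑ k : Fin (N+1), Mtri (N+2) T j k * v k
      = (4 / T ⟨j.val, by have := j.isLt; omega⟩ + 4 / T ⟨j.val+1, by have := j.isLt; omega⟩) * v j
        + (2 / T ⟨j.val+1, by have := j.isLt; omega⟩) *
            (if h : j.val + 1 < N+1 then v ⟨j.val+1, h⟩ else 0)
        + (2 / T ⟨j.val, by have := j.isLt; omega⟩) *
            (if h : 0 < j.val then v ⟨j.val-1, by omega⟩ else 0) := by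
    rw [Finset.sum_congr rfl fun k _ => point k, Finset.sum_add_distrib, Finset.sum_add_distrib]
    have s1 : (∑ k : Fin (N+1), if k = j then (4 / T ⟨j.val, by have := j.isLt; omega⟩
            + 4 / T ⟨j.val+1, by have := j.isLt; omega⟩) * v k else 0)
        = (4 / T ⟨j.val, by have := j.isLt; omega⟩
            + 4 / T ⟨j.val+1, by have := j.isLt; omega⟩) * v j := by
      rw [Finset.sum_ite_eq']; simp
    have s2 : (∑ k : Fin (N+1), if (k:ℕ) = (j:ℕ)+1
            then (2 / T ⟨j.val+1, by have := j.isLt; omega⟩) * v k else 0)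
        = (2 / T ⟨j.val+1, by have := j.isLt; omega⟩) *
            (if h : j.val + 1 < N+1 then v ⟨j.val+1, h⟩ else 0) := by
      by_cases hj : j.val + 1 < N + 1
      · rw [dif_pos hj]
        have e : ∀ k : Fin (N+1), (if (k:ℕ) = (j:ℕ)+1
              then (2 / T ⟨j.val+1, by have := j.isLt; omega⟩) * v k else 0)
            = (if k = ⟨(j:ℕ)+1, hj⟩
              then (2 / T ⟨j.val+1, by have := j.isLt; omega⟩) * v k else 0) := by
          intro k
          by_cases hk : (k:ℕ) = (j:ℕ)+1
          · rw [if_pos hk, if_pos (Fin.ext hk)]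
          · rw [if_neg hk, if_neg (fun hc => hk (by rw [hc]))]
        rw [Finset.sum_congr rfl fun k _ => e k, Finset.sum_ite_eq']
        simp
      · rw [dif_neg hj, Finset.sum_eq_zero (fun k _ => if_neg (by have := k.isLt; omega))]
        simp
    have s3 : (∑ k : Fin (N+1), if (k:ℕ)+1 = (j:ℕ)
            then (2 / T ⟨j.val, by have := j.isLt; omega⟩) * v k else 0)
        = (2 / T ⟨j.val, by have := j.isLt; omega⟩) *
            (if h : 0 < j.val then v ⟨j.val-1, by omega⟩ else 0) := by
      by_cases hj : 0 < j.val
      · rw [dif_pos hj]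
        have e : ∀ k : Fin (N+1), (if (k:ℕ)+1 = (j:ℕ)
              then (2 / T ⟨j.val, by have := j.isLt; omega⟩) * v k else 0)
            = (if k = ⟨(j:ℕ)-1, by have := j.isLt; omega⟩
              then (2 / T ⟨j.val, by have := j.isLt; omega⟩) * v k else 0) := by
          intro k
          by_cases hk : (k:ℕ)+1 = (j:ℕ)
          · rw [if_pos hk, if_pos (Fin.ext (show (k:ℕ) = (j:ℕ)-1 by omega))]
          · rw [if_neg hk, if_neg (fun hc => hk (by rw [hc]; show (j:ℕ)-1+1 = (j:ℕ); omega))]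
        rw [Finset.sum_congr rfl fun k _ => e k, Finset.sum_ite_eq']
        simp
      · rw [dif_neg hj, Finset.sum_eq_zero (fun k _ => if_neg (by omega))]
        simp
    rw [s1, s2, s3]
  calc (Mtri (N+2) T).mulVec v j = ∑ k : Fin (N+1), Mtri (N+2) T j k * v k := by
        simp [Matrix.mulVec, dotProduct]
    _ = _ := key

lemma shift_cross (T : Fin (N+2) → ℝ) (v : Fin (N+1) → ℝ) :
    ∑ j : Fin (N+1), v j * ((2 / T ⟨j.val, by have := j.isLt; omega⟩) *
        (if h : 0 < j.val then v ⟨j.val-1, by omega⟩ else 0))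
    = ∑ j : Fin (N+1), v j * ((2 / T ⟨j.val+1, by have := j.isLt; omega⟩) *
        (if h : j.val + 1 < N+1 then v ⟨j.val+1, h⟩ else 0)) := by
  trans (∑ k : Fin N, v k.succ * ((2 / T ⟨k.val+1, by have := k.isLt; omega⟩) * v k.castSucc))
  · rw [Fin.sum_univ_succ]
    simp only [Fin.val_succ]
    rw [dif_neg (by simp)]
    simp only [mul_zero, zero_add]
    refine Finset.sum_congr rfl fun k _ => ?_
    rw [dif_pos (Nat.succ_pos _)]
    congr 1
  · rw [Fin.sum_univ_castSucc]
    simp only [Fin.coe_castSucc, Fin.val_last]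
    rw [dif_neg (by omega)]
    simp only [mul_zero, add_zero]
    refine Finset.sum_congr rfl fun k _ => ?_
    rw [dif_pos (by have := k.isLt; omega)]
    have h1 : v ⟨(k:ℕ)+1, by have := k.isLt; omega⟩ = v k.succ := rfl
    rw [h1]; ring

noncomputable def Pfun (T : Fin (N+2) → ℝ) (pos : Fin (N+3) → ℝ) (v0 vM : ℝ)
    (v : Fin (N+1) → ℝ) (i : Fin (N+2)) : ℝ :=
  -12*(pos i.succ - pos i.castSucc)/(T i)^2
    + (4/(T i))*(2*vel (N+2) v0 vM (0 : Fin (N+1) → ℝ) i.castSucc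
        + vel (N+2) v0 vM (0 : Fin (N+1) → ℝ) i.succ
        + vel (N+2) 0 0 v i.castSucc + vel (N+2) 0 0 v i.succ)

noncomputable def Qfun (T : Fin (N+2) → ℝ) (pos : Fin (N+3) → ℝ) (v0 vM : ℝ)
    (v : Fin (N+1) → ℝ) (i : Fin (N+2)) : ℝ :=
  -12*(pos i.succ - pos i.castSucc)/(T i)^2
    + (4/(T i))*(vel (N+2) v0 vM (0 : Fin (N+1) → ℝ) i.castSucc
        + 2*vel (N+2) v0 vM (0 : Fin (N+1) → ℝ) i.succ
        + vel (N+2) 0 0 v i.succ)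

lemma form (T : Fin (N+2) → ℝ) (hT : ∀ i, 0 < T i) (pos : Fin (N+3) → ℝ) (v0 vM : ℝ)
    (v : Fin (N+1) → ℝ) :
    Jcost (N+2) T pos v0 vM v
      = dotProduct v ((Mtri (N+2) T).mulVec v)
        - 2 * dotProduct (btri (N+2) T pos v0 vM) v
        + Jcost (N+2) T pos v0 vM 0 := by
  have expand : ∀ w : Fin (N+1) → ℝ, Jcost (N+2) T pos v0 vM w = ∑ i : Fin (N+2),
      (12*(pos i.succ - pos i.castSucc)^2/(T i)^3
        - 12*(pos i.succ - pos i.castSucc)*(vel (N+2) v0 vM w i.castSucc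
            + vel (N+2) v0 vM w i.succ)/(T i)^2
        + 4*((vel (N+2) v0 vM w i.castSucc)^2
            + vel (N+2) v0 vM w i.castSucc * vel (N+2) v0 vM w i.succ
            + (vel (N+2) v0 vM w i.succ)^2)/(T i)) := by
    intro w
    unfold Jcost
    exact Finset.sum_congr rfl fun i _ => piece_expand _ _ _ _ _ (ne_of_gt (hT i))
  have hvel : ∀ (k : Fin (N+3)), vel (N+2) v0 vM v k
      = vel (N+2) v0 vM (0 : Fin (N+1) → ℝ) k + vel (N+2) 0 0 v k := by
    intro k
    by_cases h0 : k.val = 0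
    · rw [vel_bd0 _ _ _ _ h0, vel_bd0 _ _ _ _ h0, vel_bd0 _ _ _ _ h0]; ring
    · by_cases hM : k.val = N+2
      · rw [vel_bdM _ _ _ _ hM, vel_bdM _ _ _ _ hM, vel_bdM _ _ _ _ hM]; ring
      · have hlt := k.isLt
        have h1 : k.val = (⟨k.val - 1, by omega⟩ : Fin (N+1)).val + 1 := by
          show _ = k.val - 1 + 1; omega
        rw [vel_eval _ _ _ _ _ h1, vel_eval _ _ _ _ _ h1, vel_eval _ _ _ _ _ h1]
        simp
  have step1 : Jcost (N+2) T pos v0 vM v - Jcost (N+2) T pos v0 vM 0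
      = ∑ i : Fin (N+2), (vel (N+2) 0 0 v i.castSucc * Pfun T pos v0 vM v i
          + vel (N+2) 0 0 v i.succ * Qfun T pos v0 vM v i) := by
    rw [expand v, expand 0, ← Finset.sum_sub_distrib]
    refine Finset.sum_congr rfl fun i _ => ?_
    rw [hvel i.castSucc, hvel i.succ]
    unfold Pfun Qfun
    ring
  have z0 : vel (N+2) 0 0 v (0 : Fin (N+3)) = 0 := vel_bd0 _ _ _ _ (by simp)
  have zM : vel (N+2) 0 0 v ⟨N+2, by omega⟩ = 0 := vel_bdM _ _ _ _ rfl
  have zint : ∀ j : Fin (N+1), ∀ k : Fin (N+3), k.val = j.val + 1 →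
      vel (N+2) 0 0 v k = v j := fun j k h => vel_eval _ _ _ _ _ h
  have step2 : Jcost (N+2) T pos v0 vM v - Jcost (N+2) T pos v0 vM 0
      = ∑ j : Fin (N+1), (v j * Pfun T pos v0 vM v j.succ
          + v j * Qfun T pos v0 vM v j.castSucc) := by
    rw [step1, Finset.sum_add_distrib,
      sum_shift1 (vel (N+2) 0 0 v) (Pfun T pos v0 vM v) z0,
      sum_shift2 (vel (N+2) 0 0 v) (Qfun T pos v0 vM v) zM, ← Finset.sum_add_distrib]
    refine Finset.sum_congr rfl fun j _ => ?_
    rw [zint j _ (by simp), zint j _ (by simp)]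
  have FP : ∀ j : Fin (N+1),
      v j * Pfun T pos v0 vM v j.succ + v j * Qfun T pos v0 vM v j.castSucc
      = v j * ((4 / T ⟨j.val, by have := j.isLt; omega⟩
            + 4 / T ⟨j.val+1, by have := j.isLt; omega⟩) * v j)
        + 2 * (v j * ((2 / T ⟨j.val+1, by have := j.isLt; omega⟩) *
            (if h : j.val + 1 < N+1 then v ⟨j.val+1, h⟩ else 0)))
        - 2 * (btri (N+2) T pos v0 vM j * v j) := by
    intro j
    have hjlt := j.isLt
    have tS : T (Fin.succ j) = T ⟨j.val+1, by omega⟩ := rfl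
    have tC : T (Fin.castSucc j) = T ⟨j.val, by omega⟩ := rfl
    have p2 : pos (Fin.succ j).succ = pos ⟨j.val+2, by omega⟩ := rfl
    have p1 : pos (Fin.succ j).castSucc = pos ⟨j.val+1, by omega⟩ := rfl
    have p1' : pos (Fin.castSucc j).succ = pos ⟨j.val+1, by omega⟩ := rfl
    have p0 : pos (Fin.castSucc j).castSucc = pos ⟨j.val, by omega⟩ := rfl
    have a1 : vel (N+2) v0 vM (0 : Fin (N+1) → ℝ) (Fin.succ j).castSucc = 0 := by
      rw [vel_eval _ _ _ _ j (by simp)]; rfl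
    have a2 : vel (N+2) v0 vM (0 : Fin (N+1) → ℝ) (Fin.succ j).succ
        = (if j.val = N then vM else 0) := by
      by_cases hN : j.val = N
      · rw [if_pos hN]; exact vel_bdM _ _ _ _ (by simp [hN])
      · rw [if_neg hN, vel_eval _ _ _ _ ⟨j.val+1, by omega⟩ (by simp)]; rfl
    have a3 : vel (N+2) 0 0 v (Fin.succ j).castSucc = v j := zint j _ (by simp)
    have a4 : vel (N+2) 0 0 v (Fin.succ j).succ
        = (if h : j.val + 1 < N+1 then v ⟨j.val+1, h⟩ else 0) := by
      by_cases hN : j.val + 1 < N+1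
      · rw [dif_pos hN]; exact zint ⟨j.val+1, hN⟩ _ (by simp)
      · rw [dif_neg hN]; exact vel_bdM _ _ _ _ (by simp; omega)
    have a5 : vel (N+2) v0 vM (0 : Fin (N+1) → ℝ) (Fin.castSucc j).castSucc
        = (if j.val = 0 then v0 else 0) := by
      by_cases h0 : j.val = 0
      · rw [if_pos h0]; exact vel_bd0 _ _ _ _ (by simp [h0])
      · rw [if_neg h0, vel_eval _ _ _ _ ⟨j.val-1, by omega⟩ (by simp; omega)]; rfl
    have a6 : vel (N+2) v0 vM (0 : Fin (N+1) → ℝ) (Fin.castSucc j).succ = 0 := by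
      rw [vel_eval _ _ _ _ j (by simp)]; rfl
    have a7 : vel (N+2) 0 0 v (Fin.castSucc j).succ = v j := zint j _ (by simp)
    unfold Pfun Qfun btri
    rw [a1, a2, a3, a4, a5, a6, a7, tS, tC, p2, p1, p1', p0]
    have eM : (⟨N+2-1, by omega⟩ : Fin (N+2)) = (⟨j.val+1, by omega⟩ : Fin (N+2)) ∨ ¬ j.val = N := by
      by_cases hN : j.val = N
      · exact Or.inl (Fin.ext (by show N+2-1 = j.val+1; omega))
      · exact Or.inr hN
    have e0 : (⟨0, by omega⟩ : Fin (N+2)) = (⟨j.val, by omega⟩ : Fin (N+2)) ∨ ¬ j.val = 0 := by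
      by_cases h0 : j.val = 0
      · exact Or.inl (Fin.ext (by show 0 = j.val; omega))
      · exact Or.inr h0
    by_cases h0 : j.val = 0 <;> by_cases hN : j.val = N
    · simp only [if_pos h0, if_pos hN, if_pos (show (j:ℕ) = N+2-2 by omega),
        dif_neg (show ¬((j:ℕ)+1 < N+1) by omega), eM.resolve_right (by simp [hN]),
        e0.resolve_right (by simp [h0])]
      ring
    · simp only [if_pos h0, if_neg hN, if_neg (show ¬ (j:ℕ) = N+2-2 by omega),
        dif_pos (show (j:ℕ)+1 < N+1 by omega), e0.resolve_right (by simp [h0])]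
      ring
    · simp only [if_neg h0, if_pos hN, if_pos (show (j:ℕ) = N+2-2 by omega),
        dif_neg (show ¬((j:ℕ)+1 < N+1) by omega), eM.resolve_right (by simp [hN])]
      ring
    · simp only [if_neg h0, if_neg hN, if_neg (show ¬ (j:ℕ) = N+2-2 by omega),
        dif_pos (show (j:ℕ)+1 < N+1 by omega)]
      ring
  have key : ∑ j : Fin (N+1), (v j * Pfun T pos v0 vM v j.succ
      + v j * Qfun T pos v0 vM v j.castSucc)
      = dotProduct v ((Mtri (N+2) T).mulVec v)
        - 2 * dotProduct (btri (N+2) T pos v0 vM) v := by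
    rw [Finset.sum_congr rfl fun j _ => FP j, Finset.sum_sub_distrib]
    congr 1
    · rw [Finset.sum_add_distrib]
      have e1 : dotProduct v ((Mtri (N+2) T).mulVec v)
          = ∑ j : Fin (N+1), v j * ((Mtri (N+2) T).mulVec v j) := rfl
      have e2 : ∀ j : Fin (N+1), v j * ((Mtri (N+2) T).mulVec v j)
          = v j * ((4 / T ⟨j.val, by have := j.isLt; omega⟩
                + 4 / T ⟨j.val+1, by have := j.isLt; omega⟩) * v j)
            + v j * ((2 / T ⟨j.val+1, by have := j.isLt; omega⟩) *
                (if h : j.val + 1 < N+1 then v ⟨j.val+1, h⟩ else 0))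
            + v j * ((2 / T ⟨j.val, by have := j.isLt; omega⟩) *
                (if h : 0 < j.val then v ⟨j.val-1, by omega⟩ else 0)) := fun j => by
        rw [mtri_row]; ring
      rw [e1, Finset.sum_congr rfl fun j _ => e2 j, Finset.sum_add_distrib,
        Finset.sum_add_distrib, shift_cross]
      have e3 : ∑ j : Fin (N+1), 2 * (v j * ((2 / T ⟨j.val+1, by have := j.isLt; omega⟩) *
            (if h : j.val + 1 < N+1 then v ⟨j.val+1, h⟩ else 0)))
          = (∑ j : Fin (N+1), v j * ((2 / T ⟨j.val+1, by have := j.isLt; omega⟩) *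
            (if h : j.val + 1 < N+1 then v ⟨j.val+1, h⟩ else 0)))
          + ∑ j : Fin (N+1), v j * ((2 / T ⟨j.val+1, by have := j.isLt; omega⟩) *
            (if h : j.val + 1 < N+1 then v ⟨j.val+1, h⟩ else 0)) := by
        rw [← Finset.sum_add_distrib]
        exact Finset.sum_congr rfl fun j _ => two_mul _
      rw [e3]; ring
    · simp only [dotProduct, Finset.mul_sum]
      rfl
  linarith [step2, key]

lemma jzero_eval (T : Fin (N+2) → ℝ) (hT : ∀ i, 0 < T i) :
    Jcost (N+2) T (0 : Fin (N+3) → ℝ) 0 0 0 = 0 := by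
  unfold Jcost
  refine Finset.sum_eq_zero fun i _ => ?_
  have hv : ∀ k : Fin (N+3), vel (N+2) (0:ℝ) 0 (0 : Fin (N+1) → ℝ) k = 0 := by
    intro k; unfold vel; split_ifs <;> rfl
  rw [piece_expand _ _ _ _ _ (ne_of_gt (hT i))]
  simp [hv]

lemma qpos (T : Fin (N+2) → ℝ) (hT : ∀ i, 0 < T i) (z : Fin (N+1) → ℝ) (hz : z ≠ 0) :
    0 < dotProduct z ((Mtri (N+2) T).mulVec z) := by
  have h1 := form T hT (0 : Fin (N+3) → ℝ) 0 0 z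
  have hb : btri (N+2) T (0 : Fin (N+3) → ℝ) 0 0 = 0 := by
    funext j; simp [btri]
  have hQ : dotProduct z ((Mtri (N+2) T).mulVec z)
      = Jcost (N+2) T (0 : Fin (N+3) → ℝ) 0 0 z := by
    rw [h1, hb, jzero_eval T hT]; simp
  have hexp : Jcost (N+2) T (0 : Fin (N+3) → ℝ) 0 0 z
      = ∑ i : Fin (N+2), 4*((vel (N+2) 0 0 z i.castSucc)^2
          + vel (N+2) 0 0 z i.castSucc * vel (N+2) 0 0 z i.succ
          + (vel (N+2) 0 0 z i.succ)^2)/(T i) := by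
    unfold Jcost
    refine Finset.sum_congr rfl fun i _ => ?_
    rw [piece_expand _ _ _ _ _ (ne_of_gt (hT i))]
    norm_num
  obtain ⟨j, hj⟩ : ∃ j, z j ≠ 0 := by
    by_contra h; push_neg at h; exact hz (funext h)
  rw [hQ, hexp]
  have nonneg : ∀ i : Fin (N+2), i ∈ Finset.univ → (0:ℝ) ≤ 4*((vel (N+2) 0 0 z i.castSucc)^2
      + vel (N+2) 0 0 z i.castSucc * vel (N+2) 0 0 z i.succ
      + (vel (N+2) 0 0 z i.succ)^2)/(T i) := by
    intro i _
    have ht := hT i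
    have h2 : (0:ℝ) ≤ (vel (N+2) 0 0 z i.castSucc)^2
        + vel (N+2) 0 0 z i.castSucc * vel (N+2) 0 0 z i.succ
        + (vel (N+2) 0 0 z i.succ)^2 := by
      nlinarith [sq_nonneg (vel (N+2) 0 0 z i.castSucc + vel (N+2) 0 0 z i.succ),
        sq_nonneg (vel (N+2) 0 0 z i.castSucc), sq_nonneg (vel (N+2) 0 0 z i.succ)]
    positivity
  refine Finset.sum_pos' nonneg ⟨j.castSucc, Finset.mem_univ _, ?_⟩
  have hvs : vel (N+2) (0:ℝ) 0 z (Fin.castSucc j).succ = z j :=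
    vel_eval _ _ _ _ j (by simp)
  rw [hvs]
  have ht := hT j.castSucc
  have h2 : (0:ℝ) < (z j)^2 := by
    rcases lt_or_gt_of_ne hj with h | h <;> nlinarith
  have h3 : (0:ℝ) < (vel (N+2) 0 0 z (Fin.castSucc j).castSucc)^2
      + vel (N+2) 0 0 z (Fin.castSucc j).castSucc * z j + (z j)^2 := by
    nlinarith [sq_nonneg (2 * vel (N+2) 0 0 z (Fin.castSucc j).castSucc + z j)]
  positivity

lemma dot_symm (T : Fin (N+2) → ℝ) (x y : Fin (N+1) → ℝ) :
    dotProduct x ((Mtri (N+2) T).mulVec y)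
      = dotProduct y ((Mtri (N+2) T).mulVec x) := by
  calc dotProduct x ((Mtri (N+2) T).mulVec y)
      = ∑ j : Fin (N+1), ∑ k : Fin (N+1), x j * (Mtri (N+2) T j k * y k) := by
        simp [dotProduct, Matrix.mulVec, Finset.mul_sum]
    _ = ∑ k : Fin (N+1), ∑ j : Fin (N+1), x j * (Mtri (N+2) T j k * y k) := Finset.sum_comm
    _ = ∑ k : Fin (N+1), ∑ j : Fin (N+1), y k * (Mtri (N+2) T k j * x j) :=
        Finset.sum_congr rfl fun k _ => Finset.sum_congr rfl fun j _ => by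
          rw [mtri_symm T k j]; ring
    _ = dotProduct y ((Mtri (N+2) T).mulVec x) := by
        simp [dotProduct, Matrix.mulVec, Finset.mul_sum]

theorem spline_energy_strictly_convex_unique_minimizer_tridiagonal
    (M : ℕ) (hM : 2 ≤ M) (T : Fin M → ℝ) (hT : ∀ i, 0 < T i)
    (pos : Fin (M + 1) → ℝ) (v0 vM : ℝ) :
    StrictConvexOn ℝ Set.univ (Jcost M T pos v0 vM) ∧
    (∃! w : Fin (M - 1) → ℝ, IsMinOn (Jcost M T pos v0 vM) Set.univ w) ∧
    (∀ w : Fin (M - 1) → ℝ, IsMinOn (Jcost M T pos v0 vM) Set.univ w →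
      (Mtri M T).mulVec w = btri M T pos v0 vM) := by
  obtain ⟨N, rfl⟩ : ∃ N, M = N + 2 := ⟨M - 2, by omega⟩
  set J : (Fin (N+1) → ℝ) → ℝ := Jcost (N+2) T pos v0 vM with hJ
  set A : Matrix (Fin (N+1)) (Fin (N+1)) ℝ := Mtri (N+2) T with hA
  set b : Fin (N+1) → ℝ := btri (N+2) T pos v0 vM with hb
  have hform : ∀ v : Fin (N+1) → ℝ, J v
      = dotProduct v (A.mulVec v) - 2 * dotProduct b v
        + J 0 := fun v => form T hT pos v0 vM v
  have exp : ∀ (x z : Fin (N+1) → ℝ), J (x + z)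
      = J x + 2 * dotProduct (A.mulVec x - b) z
        + dotProduct z (A.mulVec z) := by
    intro x z
    rw [hform (x + z), hform x]
    have hsym : dotProduct z (A.mulVec x) = dotProduct x (A.mulVec z) :=
      dot_symm T z x
    simp only [Matrix.mulVec_add, dotProduct_add, add_dotProduct,
      sub_dotProduct, hsym]
    have hcomm : dotProduct (A.mulVec x) z = dotProduct z (A.mulVec x) :=
      dotProduct_comm _ _
    rw [hcomm, hsym]
    ring
  have qnonneg : ∀ z : Fin (N+1) → ℝ, 0 ≤ dotProduct z (A.mulVec z) := by
    intro z
    by_cases h : z = 0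
    · subst h; simp
    · exact (qpos T hT z h).le
  have part3 : ∀ w : Fin (N+1) → ℝ, IsMinOn J Set.univ w → A.mulVec w = b := by
    intro w hmin
    have hineq : ∀ z : Fin (N+1) → ℝ,
        0 ≤ 2 * dotProduct (A.mulVec w - b) z + dotProduct z (A.mulVec z) := by
      intro z
      have h1 : J w ≤ J (w + z) := isMinOn_iff.mp hmin _ (Set.mem_univ _)
      rw [exp w z] at h1
      linarith
    by_contra hne
    set g : Fin (N+1) → ℝ := A.mulVec w - b with hg
    have hgne : g ≠ 0 := fun h => hne (by rw [← sub_eq_zero]; exact h)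
    have hgg : 0 < dotProduct g g := by
      have h1 : 0 ≤ dotProduct g g := Finset.sum_nonneg fun i _ => mul_self_nonneg _
      have h2 : dotProduct g g ≠ 0 := fun h => hgne (dotProduct_self_eq_zero.mp h)
      exact lt_of_le_of_ne h1 (Ne.symm h2)
    have hQg : 0 < dotProduct g (A.mulVec g) := qpos T hT g hgne
    set t : ℝ := dotProduct g g / dotProduct g (A.mulVec g) with htdef
    have ht : 0 < t := div_pos hgg hQg
    have e3 : t * dotProduct g (A.mulVec g) = dotProduct g g :=
      div_mul_cancel₀ _ (ne_of_gt hQg)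
    have := hineq ((-t) • g)
    have e1 : dotProduct g ((-t) • g) = -t * dotProduct g g := by
      rw [dotProduct_smul]; simp [smul_eq_mul]
    have e2 : dotProduct ((-t) • g) (A.mulVec ((-t) • g))
        = t^2 * dotProduct g (A.mulVec g) := by
      rw [Matrix.mulVec_smul, smul_dotProduct, dotProduct_smul]
      simp only [smul_eq_mul]; ring
    rw [e1, e2] at this
    nlinarith [this, ht, hgg, e3, mul_pos ht hgg]
  -- strict convexity
  have hconv : StrictConvexOn ℝ Set.univ J := by
    refine ⟨convex_univ, ?_⟩
    intro x _ y _ hxy a c ha hc hac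
    have hq := qpos T hT (x - y) (sub_ne_zero.mpr hxy)
    have hxAy : dotProduct y (A.mulVec x) = dotProduct x (A.mulVec y) :=
      dot_symm T y x
    have hsub : dotProduct (x - y) (A.mulVec (x - y))
        = dotProduct x (A.mulVec x) - 2 * dotProduct x (A.mulVec y)
          + dotProduct y (A.mulVec y) := by
      rw [Matrix.mulVec_sub, sub_dotProduct, dotProduct_sub,
        dotProduct_sub, hxAy]
      ring
    rw [hsub] at hq
    have hmix : J (a • x + c • y)
        = a^2 * dotProduct x (A.mulVec x) + 2*a*c * dotProduct x (A.mulVec y)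
          + c^2 * dotProduct y (A.mulVec y)
          - 2*a * dotProduct b x - 2*c * dotProduct b y + J 0 := by
      rw [hform]
      simp only [Matrix.mulVec_add, Matrix.mulVec_smul, dotProduct_add,
        add_dotProduct, dotProduct_smul, smul_dotProduct, smul_eq_mul]
      rw [hxAy]
      ring
    have hx := hform x
    have hy := hform y
    simp only [smul_eq_mul]
    rw [hmix, hx, hy]
    have hid : a * (dotProduct x (A.mulVec x) - 2 * dotProduct b x + J 0)
        + c * (dotProduct y (A.mulVec y) - 2 * dotProduct b y + J 0)
        - (a^2 * dotProduct x (A.mulVec x) + 2*a*c * dotProduct x (A.mulVec y)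
          + c^2 * dotProduct y (A.mulVec y)
          - 2*a * dotProduct b x - 2*c * dotProduct b y + J 0)
        = a * c * (dotProduct x (A.mulVec x) - 2 * dotProduct x (A.mulVec y)
            + dotProduct y (A.mulVec y)) := by
      linear_combination (-(a * dotProduct x (A.mulVec x))
        - c * dotProduct y (A.mulVec y) + J 0) * hac
    have hpos := mul_pos (mul_pos ha hc) hq
    linarith [hid, hpos]
  -- existence of minimizer
  have hker : ∀ z : Fin (N+1) → ℝ, A.mulVecLin z = 0 → z = 0 := by
    intro z hz
    by_contra h
    have h1 := qpos T hT z h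
    have h2 : A.mulVec z = 0 := hz
    rw [h2] at h1
    simp at h1
  have hinj : Function.Injective A.mulVecLin :=
    (injective_iff_map_eq_zero A.mulVecLin).mpr hker
  obtain ⟨wstar, hwstar⟩ := LinearMap.injective_iff_surjective.mp hinj b
  have hw : A.mulVec wstar = b := hwstar
  have hmin : IsMinOn J Set.univ wstar := by
    refine isMinOn_iff.mpr fun y _ => ?_
    have e : wstar + (y - wstar) = y := by abel
    have h1 := exp wstar (y - wstar)
    rw [e, hw, sub_self, zero_dotProduct] at h1
    have := qnonneg (y - wstar)
    rw [h1]
    linarith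
  have uniq : ∀ y : Fin (N+1) → ℝ, IsMinOn J Set.univ y → y = wstar := by
    intro y hy
    have h1 := part3 y hy
    have heq : J y = J wstar :=
      le_antisymm (isMinOn_iff.mp hy _ (Set.mem_univ _)) (isMinOn_iff.mp hmin _ (Set.mem_univ _))
    by_contra hne
    have h2 := exp y (wstar - y)
    have e : y + (wstar - y) = wstar := by abel
    rw [e, h1, sub_self, zero_dotProduct] at h2
    have h3 := qpos T hT (wstar - y) (sub_ne_zero.mpr fun h => hne h.symm)
    rw [heq] at h2
    linarith
  exact ⟨hconv, ⟨wstar, hmin, fun y hy => uniq y hy⟩, part3⟩
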